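/- arXiv:2407.20781 — 2 statements merged into one kernel-verified Lean document; each statement's English description precedes it below -/
import Mathlib

section
/- Let K, F be totally real number fields with F ⊆ K and [K : F] = d. If α ∈ O_K^+ is F-representable, then there exists a totally positive definite quadratic O_F-lattice L(α) of rank at most d + 1 such that L(α) ⊗_{O_F} O_K represents α. In particular, if O_K = O_F·w_1 + ⋯ + O_F·w_g as an O_F-module, then there exists a totally positive semidefinite quadratic form Q in g variables with coefficients in O_F such that Q(w_1, …, w_g) = α. -/
open scoped NumberField TensorProduct
open Finset

noncomputable section

/-- An element of a field is *totally positive* if every real embedding sends it to a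
positive real number. -/
def TPos {F : Type*} [Field F] (x : F) : Prop := ∀ σ : F →+* ℝ, 0 < σ x

/-- `TNonneg x` (`x ⪰ 0`) : every real embedding sends `x` to a nonnegative real. -/
def TNonneg {F : Type*} [Field F] (x : F) : Prop := ∀ σ : F →+* ℝ, 0 ≤ σ x

/-- `TLe x y` (`x ⪯ y`) : every real embedding `σ` satisfies `σ x ≤ σ y`. -/
def TLe {F : Type*} [Field F] (x y : F) : Prop := ∀ σ : F →+* ℝ, σ x ≤ σ y

/-- A field is *totally real* if every embedding into `ℂ` has real image. -/
def IsTotallyRealField (F : Type*) [Field F] : Prop :=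
  ∀ σ : F →+* ℂ, ∀ x : F, (σ x).im = 0

/-- A quadratic `𝓞 F`-lattice `(L, Q)` is *totally positive definite* if `Q v` is totally
positive for every nonzero `v`. -/
def IsTotallyPositiveDefinite {F : Type*} [Field F] {L : Type*} [AddCommGroup L]
    [Module (𝓞 F) L] (Q : QuadraticMap (𝓞 F) L F) : Prop :=
  ∀ v : L, v ≠ 0 → TPos (Q v)

/-- The value of the `𝓞 K`-quadratic extension of `Q` to `L ⊗[𝓞 F] 𝓞 K`
at the element `∑ i, (c i) ⊗ (v i)`. -/
def ExtVal {F K : Type*} [Field F] [Field K] [Algebra F K] {L : Type*} [AddCommGroup L]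
    [Module (𝓞 F) L] (Q : QuadraticMap (𝓞 F) L F) {n : ℕ}
    (c : Fin n → 𝓞 K) (v : Fin n → L) : K :=
  (∑ i, (c i : K) ^ 2 * algebraMap F K (Q (v i))) +
    ∑ i, ∑ j, if i < j
      then (c i : K) * (c j : K) * algebraMap F K (QuadraticMap.polar (⇑Q) (v i) (v j))
      else 0

/-- `L ⊗[𝓞 F] 𝓞 K` (with `Q` extended `𝓞 K`-quadratically) represents `α ∈ 𝓞 K`. -/
def RepresentsOver {F K : Type*} [Field F] [Field K] [Algebra F K] {L : Type*}
    [AddCommGroup L] [Module (𝓞 F) L] (Q : QuadraticMap (𝓞 F) L F) (α : 𝓞 K) : Prop :=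
  ∃ (n : ℕ) (c : Fin n → 𝓞 K) (v : Fin n → L), ExtVal Q c v = (α : K)

/-- `α ∈ 𝓞 K` is *`F`-representable*: some totally positive definite quadratic
`𝓞 F`-lattice represents `α` after base change to `𝓞 K`. -/
def FRepresentable (F : Type*) {K : Type*} [Field F] [Field K] [Algebra F K]
    (α : 𝓞 K) : Prop :=
  ∃ (L : Type) (_ : AddCommGroup L) (_ : Module (𝓞 F) L) (_ : Module.Finite (𝓞 F) L)
    (Q : QuadraticMap (𝓞 F) L F),
      IsTotallyPositiveDefinite Q ∧ RepresentsOver Q α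

/-- There exists a totally positive definite quadratic `𝓞 F`-lattice `L` such that
`L ⊗[𝓞 F] 𝓞 K` is universal over `𝓞 K`. -/
def ExistsUniversalLattice (F K : Type*) [Field F] [Field K] [Algebra F K] : Prop :=
  ∃ (L : Type) (_ : AddCommGroup L) (_ : Module (𝓞 F) L) (_ : Module.Finite (𝓞 F) L)
    (Q : QuadraticMap (𝓞 F) L F),
      IsTotallyPositiveDefinite Q ∧ ∀ α : 𝓞 K, TPos ((α : K)) → RepresentsOver Q α

/-- The relative discriminant ideal of a quadratic extension `K/F`: the ideal of `𝓞 F`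
generated by all `det (Tr_{K/F} (aᵢ * aⱼ))` with `a₁, a₂ ∈ 𝓞 K`. -/
def RelDiscr (F K : Type*) [Field F] [Field K] [Algebra F K] : Ideal (𝓞 F) :=
  Ideal.span {d : 𝓞 F | ∃ a₁ a₂ : 𝓞 K,
    (d : F) =
      Algebra.trace F K ((a₁ : K) * (a₁ : K)) * Algebra.trace F K ((a₂ : K) * (a₂ : K)) -
        Algebra.trace F K ((a₁ : K) * (a₂ : K)) * Algebra.trace F K ((a₂ : K) * (a₁ : K))}

section Aux

variable {F K : Type*} [Field F] [Field K] [Algebra F K]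
variable {L : Type*} [AddCommGroup L] [Module (𝓞 F) L]

lemma sum_sym {n : ℕ} (f : Fin n → Fin n → K) (hsym : ∀ i j, f i j = f j i) :
    ∑ i, ∑ j, f i j
      = (∑ i, f i i) + 2 * ∑ i, ∑ j, (if i < j then f i j else 0) := by
  have h1 : ∀ i j : Fin n, f i j =
      (if i < j then f i j else 0) + (if i = j then f i j else 0)
        + (if j < i then f i j else 0) := by
    intro i j
    rcases lt_trichotomy i j with h | h | h
    · simp [h, h.ne, asymm h]
    · simp [h, lt_irrefl]
    · simp [h, h.ne', asymm h]
  calc ∑ i, ∑ j, f i j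
      = ∑ i, ∑ j, ((if i < j then f i j else 0) + (if i = j then f i j else 0)
          + (if j < i then f i j else 0)) :=
        Finset.sum_congr rfl fun i _ => Finset.sum_congr rfl fun j _ => h1 i j
    _ = (∑ i, ∑ j, (if i < j then f i j else 0)) + (∑ i, ∑ j, (if i = j then f i j else 0))
          + ∑ i, ∑ j, (if j < i then f i j else 0) := by
        simp [Finset.sum_add_distrib]
    _ = (∑ i, ∑ j, (if i < j then f i j else 0)) + (∑ i, f i i)
          + ∑ i, ∑ j, (if i < j then f i j else 0) := by
        congr 1
        · congr 1
          simp [Finset.sum_ite_eq]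
        · rw [Finset.sum_comm]
          exact Finset.sum_congr rfl fun i _ => Finset.sum_congr rfl fun j _ => by
            rcases em (i < j) with h | h <;> simp [h, hsym i j]
    _ = _ := by ring

lemma two_mul_extVal (Q : QuadraticMap (𝓞 F) L F) {n : ℕ} (c : Fin n → 𝓞 K)
    (v : Fin n → L) :
    2 * ExtVal Q c v
      = ∑ i, ∑ j, (c i : K) * (c j : K)
          * algebraMap F K (QuadraticMap.polar (⇑Q) (v i) (v j)) := by
  rw [sum_sym _ (fun i j => by rw [QuadraticMap.polar_comm]; ring)]
  have hdiag : ∑ i, (c i : K) * (c i : K)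
      * algebraMap F K (QuadraticMap.polar (⇑Q) (v i) (v i))
      = 2 * ∑ i, (c i : K) ^ 2 * algebraMap F K (Q (v i)) := by
    rw [Finset.mul_sum]
    refine Finset.sum_congr rfl fun i _ => ?_
    rw [QuadraticMap.polar_self, two_smul, map_add]
    ring
  simp only [ExtVal]
  rw [hdiag]
  ring

lemma sum_swap4 {M : Type*} [AddCommMonoid M] {a b c d : ℕ}
    (f : Fin a → Fin b → Fin c → Fin d → M) :
    ∑ i, ∑ j, ∑ k, ∑ l, f i j k l = ∑ k, ∑ l, ∑ i, ∑ j, f i j k l :=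
  calc ∑ i, ∑ j, ∑ k, ∑ l, f i j k l
      = ∑ i, ∑ k, ∑ j, ∑ l, f i j k l :=
        Finset.sum_congr rfl fun i _ => Finset.sum_comm
    _ = ∑ k, ∑ i, ∑ j, ∑ l, f i j k l := Finset.sum_comm
    _ = ∑ k, ∑ i, ∑ l, ∑ j, f i j k l :=
        Finset.sum_congr rfl fun k _ => Finset.sum_congr rfl fun i _ => Finset.sum_comm
    _ = ∑ k, ∑ l, ∑ i, ∑ j, f i j k l :=
        Finset.sum_congr rfl fun k _ => Finset.sum_comm

lemma extVal_subst [CharZero K] (Q : QuadraticMap (𝓞 F) L F) {n g : ℕ}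
    (c : Fin n → 𝓞 K) (v : Fin n → L) (w : Fin g → 𝓞 K) (b : Fin n → Fin g → 𝓞 F)
    (hc : ∀ i, (c i : K) = ∑ k, algebraMap F K (algebraMap (𝓞 F) F (b i k)) * (w k : K)) :
    ExtVal Q c v = ExtVal Q w (fun k => ∑ i, b i k • v i) := by
  apply mul_left_cancel₀ (two_ne_zero (α := K))
  rw [two_mul_extVal, two_mul_extVal]
  have hpol : ∀ k l : Fin g,
      algebraMap F K (QuadraticMap.polar (⇑Q) (∑ i, b i k • v i) (∑ j, b j l • v j))
        = ∑ i, ∑ j, algebraMap F K (algebraMap (𝓞 F) F (b i k))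
            * algebraMap F K (algebraMap (𝓞 F) F (b j l))
            * algebraMap F K (QuadraticMap.polar (⇑Q) (v i) (v j)) := by
    intro k l
    have : QuadraticMap.polar (⇑Q) (∑ i, b i k • v i) (∑ j, b j l • v j)
        = ∑ i, ∑ j, b i k • (b j l • QuadraticMap.polar (⇑Q) (v i) (v j)) := by
      simp only [← QuadraticMap.polarBilin_apply_apply, map_sum, map_smul,
        LinearMap.coe_sum, LinearMap.sum_apply, LinearMap.smul_apply]
      simp only [Finset.smul_sum]
      rw [Finset.sum_comm]
      exact Finset.sum_congr rfl fun i _ => Finset.sum_congr rfl fun j _ => smul_comm _ _ _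
    rw [this]
    simp only [map_sum, Algebra.smul_def, map_mul]
    exact Finset.sum_congr rfl fun i _ => Finset.sum_congr rfl fun j _ => by ring
  calc ∑ i, ∑ j, (c i : K) * (c j : K)
        * algebraMap F K (QuadraticMap.polar (⇑Q) (v i) (v j))
      = ∑ i, ∑ j, ∑ k, ∑ l,
          ((w k : K) * (w l : K))
            * (algebraMap F K (algebraMap (𝓞 F) F (b i k))
              * algebraMap F K (algebraMap (𝓞 F) F (b j l))
              * algebraMap F K (QuadraticMap.polar (⇑Q) (v i) (v j))) := by
        refine Finset.sum_congr rfl fun i _ => Finset.sum_congr rfl fun j _ => ?_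
        rw [hc i, hc j]
        simp only [Finset.sum_mul, Finset.mul_sum]
        rw [Finset.sum_comm]
        exact Finset.sum_congr rfl fun k _ => Finset.sum_congr rfl fun l _ => by ring
    _ = ∑ k, ∑ l, ∑ i, ∑ j,
          ((w k : K) * (w l : K))
            * (algebraMap F K (algebraMap (𝓞 F) F (b i k))
              * algebraMap F K (algebraMap (𝓞 F) F (b j l))
              * algebraMap F K (QuadraticMap.polar (⇑Q) (v i) (v j))) := sum_swap4 _
    _ = _ := by
        refine Finset.sum_congr rfl fun k _ => Finset.sum_congr rfl fun l _ => ?_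
        rw [hpol k l, Finset.mul_sum]
        refine Finset.sum_congr rfl fun i _ => ?_
        rw [Finset.mul_sum]

lemma extVal_comp {L' : Type*} [AddCommGroup L'] [Module (𝓞 F) L']
    (Q : QuadraticMap (𝓞 F) L F) (T : L' →ₗ[𝓞 F] L) {n : ℕ}
    (c : Fin n → 𝓞 K) (v : Fin n → L') :
    ExtVal (Q.comp T) c v = ExtVal Q c (fun i => T (v i)) := by
  have hp : ∀ x y : L', QuadraticMap.polar (⇑(Q.comp T)) x y
      = QuadraticMap.polar (⇑Q) (T x) (T y) := by
    intro x y
    simp [QuadraticMap.polar, QuadraticMap.comp_apply, map_add]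
  simp only [ExtVal, QuadraticMap.comp_apply, hp]

lemma extVal_smul (Q : QuadraticMap (𝓞 F) L F) (s : F) {n : ℕ}
    (c : Fin n → 𝓞 K) (v : Fin n → L) :
    ExtVal (s • Q) c v = algebraMap F K s * ExtVal Q c v := by
  have hp : ∀ x y : L, QuadraticMap.polar (⇑(s • Q)) x y
      = s * QuadraticMap.polar (⇑Q) x y := by
    intro x y
    simp only [QuadraticMap.polar, QuadraticMap.smul_apply, smul_eq_mul]
    ring
  simp only [ExtVal, hp, QuadraticMap.smul_apply, smul_eq_mul, map_mul]
  rw [mul_add, Finset.mul_sum, Finset.mul_sum]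
  congr 1
  · exact Finset.sum_congr rfl fun i _ => by ring
  · refine Finset.sum_congr rfl fun i _ => ?_
    rw [Finset.mul_sum]
    refine Finset.sum_congr rfl fun j _ => ?_
    rcases em (i < j) with h | h <;> simp [h] <;> ring

lemma extVal_scale (Q : QuadraticMap (𝓞 F) L F) (t : 𝓞 K) {n : ℕ}
    (c : Fin n → 𝓞 K) (v : Fin n → L) :
    ExtVal Q (fun i => t * c i) v = (t : K) ^ 2 * ExtVal Q c v := by
  have hco : ∀ x y : 𝓞 K, ((x * y : 𝓞 K) : K) = (x : K) * (y : K) := fun x y =>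
    map_mul (algebraMap (𝓞 K) K) x y
  simp only [ExtVal, hco]
  rw [mul_add, Finset.mul_sum, Finset.mul_sum]
  congr 1
  · exact Finset.sum_congr rfl fun i _ => by ring
  · refine Finset.sum_congr rfl fun i _ => ?_
    rw [Finset.mul_sum]
    refine Finset.sum_congr rfl fun j _ => ?_
    rcases em (i < j) with h | h <;> simp [h] <;> ring

end Aux

/-- If `α ∈ 𝓞 K` is totally positive and `F`-representable, then it is
represented by (the base change of) a totally positive definite quadratic `𝓞 F`-lattice of
rank at most `d + 1`, where `d = [K : F]`.  In particular, if `𝓞 K = 𝓞 F w₁ + ⋯ + 𝓞 F w_g`,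
then there is a totally positive semidefinite quadratic form `Q` in `g` variables over `𝓞 F`
with `Q(w₁, …, w_g) = α`. -/
theorem statement1 (F K : Type) [Field F] [NumberField F] [Field K] [NumberField K]
    [Algebra F K] (hF : IsTotallyRealField F) (hK : IsTotallyRealField K)
    (d : ℕ) (hd : Module.finrank F K = d)
    (α : 𝓞 K) (hpos : TPos ((α : K))) (hrep : FRepresentable F α) :
    (∃ (L : Type) (_ : AddCommGroup L) (_ : Module (𝓞 F) L) (_ : Module.Finite (𝓞 F) L)
      (Q : QuadraticMap (𝓞 F) L F),
        IsTotallyPositiveDefinite Q ∧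
        Module.finrank F (F ⊗[𝓞 F] L) ≤ d + 1 ∧
        RepresentsOver Q α) ∧
    ∀ (g : ℕ) (w : Fin g → 𝓞 K),
      (∀ x : 𝓞 K, ∃ c : Fin g → 𝓞 F, x = ∑ i, algebraMap (𝓞 F) (𝓞 K) (c i) * w i) →
      ∃ Q : QuadraticMap (𝓞 F) (Fin g → 𝓞 F) F,
        (∀ v : Fin g → 𝓞 F, TNonneg (Q v)) ∧
        ExtVal Q w (fun i => Pi.single i 1) = (α : K) := by
  classical
  obtain ⟨L₀, iAG, iMod, iFin, Q₀, hQ₀, n, c, v, hval⟩ := hrep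
  have hco : ∀ r : 𝓞 F, ((algebraMap (𝓞 F) (𝓞 K) r : 𝓞 K) : K)
      = algebraMap F K (algebraMap (𝓞 F) F r) := fun r => by
    rw [NumberField.RingOfIntegers.coe_eq_algebraMap, ← IsScalarTower.algebraMap_apply,
      IsScalarTower.algebraMap_apply (𝓞 F) F K]
  constructor
  · -- Part 1
    set b0 : Module.Basis (Fin d) F K := Module.finBasisOfFinrankEq F K hd with hb0
    obtain ⟨y, hy0, hyint⟩ := exists_integral_multiples (𝓞 F) F (Finset.univ.image b0)
    have hint : ∀ j, ∃ ej : 𝓞 K, (ej : K) = y • b0 j := fun j =>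
      IsIntegralClosure.isIntegral_iff.mp
        (hyint _ (Finset.mem_image_of_mem b0 (Finset.mem_univ j)))
    choose e he using hint
    have hy' : algebraMap (𝓞 F) F y ≠ 0 :=
      (map_ne_zero_iff _ (IsFractionRing.injective (𝓞 F) F)).mpr hy0
    set b1 : Module.Basis (Fin d) F K := b0.unitsSMul fun _ => Units.mk0 _ hy' with hb1def
    have hb1 : ∀ j, b1 j = (e j : K) := by
      intro j
      rw [hb1def, Module.Basis.unitsSMul_apply, he j, Units.smul_mk0]
      exact algebraMap_smul F y (b0 j)
    obtain ⟨lam, hlam⟩ := IsLocalization.exist_integer_multiples (nonZeroDivisors (𝓞 F))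
      (Finset.univ : Finset (Fin n × Fin d)) (fun p => b1.repr (c p.1 : K) p.2)
    have hlam' : ∀ p : Fin n × Fin d, ∃ r : 𝓞 F,
        algebraMap (𝓞 F) F r = (lam : 𝓞 F) • b1.repr (c p.1 : K) p.2 := fun p =>
      hlam p (Finset.mem_univ p)
    choose bm hbm using hlam'
    set lam0 : F := algebraMap (𝓞 F) F (lam : 𝓞 F) with hlam0def
    have hlam0 : lam0 ≠ 0 :=
      (map_ne_zero_iff _ (IsFractionRing.injective (𝓞 F) F)).mpr (nonZeroDivisors.coe_ne_zero lam)
    set c' : Fin n → 𝓞 K := fun i => algebraMap (𝓞 F) (𝓞 K) (lam : 𝓞 F) * c i with hc'def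
    have hc' : ∀ i, (c' i : K)
        = ∑ j, algebraMap F K (algebraMap (𝓞 F) F (bm (i, j))) * (e j : K) := by
      intro i
      have h1 : (c' i : K) = algebraMap F K lam0 * (c i : K) := by
        rw [hc'def]
        simp only [map_mul (algebraMap (𝓞 K) K), NumberField.RingOfIntegers.coe_eq_algebraMap]
        rw [← NumberField.RingOfIntegers.coe_eq_algebraMap (algebraMap (𝓞 F) (𝓞 K) (lam : 𝓞 F)),
          hco]
      rw [h1, ← Module.Basis.sum_repr b1 (c i : K), Finset.mul_sum]
      refine Finset.sum_congr rfl fun j _ => ?_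
      rw [← hb1 j, Algebra.smul_def, hbm (i, j), Algebra.smul_def, map_mul, ← hlam0def]
      ring
    set u' : Fin d → L₀ := fun j => ∑ i, bm (i, j) • v i with hu'def
    have hkey : ExtVal Q₀ c' v = ExtVal Q₀ e u' :=
      extVal_subst Q₀ c' v e (fun i j => bm (i, j)) hc'
    have hscale : ExtVal Q₀ c' v = algebraMap F K lam0 ^ 2 * (α : K) := by
      rw [hc'def]
      rw [extVal_scale Q₀ (algebraMap (𝓞 F) (𝓞 K) (lam : 𝓞 F)) c v, hco, hval]
    set M : Submodule (𝓞 F) L₀ := Submodule.span (𝓞 F) (Set.range u') with hMdef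
    have hmem : ∀ j, u' j ∈ M := fun j => Submodule.subset_span (Set.mem_range_self j)
    haveI : Module.Finite (𝓞 F) ↥M :=
      Module.Finite.iff_fg.mpr (Submodule.fg_span (Set.finite_range u'))
    refine ⟨↥M, inferInstance, inferInstance, inferInstance,
      (((lam0 ^ 2)⁻¹ : F) • Q₀).comp M.subtype, ?_, ?_, ?_⟩
    · -- totally positive definite
      intro x hx σ
      have hx0 : (x : L₀) ≠ 0 := fun h => hx (Submodule.coe_eq_zero.mp h)
      have h1 : 0 < σ (Q₀ (x : L₀)) := hQ₀ _ hx0 σ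
      have h2 : σ lam0 ≠ 0 := fun h => hlam0 (σ.injective (by rw [h, map_zero]))
      rw [QuadraticMap.comp_apply, Submodule.subtype_apply, QuadraticMap.smul_apply,
        smul_eq_mul, map_mul, map_inv₀, map_pow]
      have h3 : 0 < σ lam0 ^ 2 := by positivity
      exact mul_pos (inv_pos.mpr h3) h1
    · -- rank bound
      set ψ : (Fin d → 𝓞 F) →ₗ[𝓞 F] ↥M :=
        Fintype.linearCombination (𝓞 F) (fun j => (⟨u' j, hmem j⟩ : ↥M)) with hψdef
      have hψ : Function.Surjective ψ := by
        rintro ⟨x, hx⟩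
        obtain ⟨a, ha⟩ := (Submodule.mem_span_range_iff_exists_fun (𝓞 F)).mp hx
        refine ⟨a, Subtype.ext ?_⟩
        have : ((ψ a : ↥M) : L₀) = ∑ j, a j • u' j := by
          simp [hψdef, Fintype.linearCombination_apply]
        rw [this, ha]
      have hψK : Function.Surjective (ψ.baseChange F) := by
        intro z
        induction z using TensorProduct.induction_on with
        | zero => exact ⟨0, map_zero _⟩
        | tmul f m =>
            obtain ⟨a, ha⟩ := hψ m
            exact ⟨f ⊗ₜ a, by rw [LinearMap.baseChange_tmul, ha]⟩
        | add x y hx hy =>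
            obtain ⟨a, ha⟩ := hx
            obtain ⟨b', hb'⟩ := hy
            exact ⟨a + b', by rw [map_add, ha, hb']⟩
      haveI : Module.Finite F (TensorProduct (𝓞 F) F (Fin d → 𝓞 F)) :=
        Module.Finite.of_basis ((Pi.basisFun (𝓞 F) (Fin d)).baseChange F)
      have h1 : Module.finrank F (TensorProduct (𝓞 F) F (Fin d → 𝓞 F)) = d := by
        rw [Module.finrank_eq_card_basis ((Pi.basisFun (𝓞 F) (Fin d)).baseChange F),
          Fintype.card_fin]
      have h2 : Module.finrank F (TensorProduct (𝓞 F) F ↥M) ≤ d := by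
        have h3 := (ψ.baseChange F).finrank_range_le
        rwa [LinearMap.range_eq_top.mpr hψK, finrank_top, h1] at h3
      exact h2.trans (Nat.le_succ d)
    · -- represents α
      refine ⟨d, e, fun j => ⟨u' j, hmem j⟩, ?_⟩
      rw [extVal_comp]
      have hfun : (fun j => M.subtype ⟨u' j, hmem j⟩) = u' := rfl
      rw [hfun, extVal_smul, ← hkey, hscale, map_inv₀, map_pow]
      rw [inv_mul_cancel_left₀ (pow_ne_zero 2 ((map_ne_zero_iff _
        (algebraMap F K).injective).mpr hlam0))]
  · -- Part 2
    intro g w hw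
    choose b hb using fun i => hw (c i)
    have hc : ∀ i, (c i : K)
        = ∑ j, algebraMap F K (algebraMap (𝓞 F) F (b i j)) * (w j : K) := by
      intro i
      rw [hb i, NumberField.RingOfIntegers.coe_eq_algebraMap, map_sum]
      refine Finset.sum_congr rfl fun j _ => ?_
      rw [map_mul, ← NumberField.RingOfIntegers.coe_eq_algebraMap,
        ← NumberField.RingOfIntegers.coe_eq_algebraMap, hco]
    set u : Fin g → L₀ := fun j => ∑ i, b i j • v i with hudef
    set T : (Fin g → 𝓞 F) →ₗ[𝓞 F] L₀ :=
      Fintype.linearCombination (𝓞 F) u with hTdef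
    refine ⟨Q₀.comp T, ?_, ?_⟩
    · intro x σ
      rw [QuadraticMap.comp_apply]
      by_cases hx : T x = 0
      · rw [hx, QuadraticMap.map_zero, map_zero]
      · exact (hQ₀ _ hx σ).le
    · rw [extVal_comp]
      have hT : (fun j => T (Pi.single j 1)) = u := by
        funext j
        simp [hTdef, Fintype.linearCombination_apply, Pi.single_apply]
      rw [hT, ← extVal_subst Q₀ c v w b hc, hval]

end
end

section
/- Let F be a real quadratic number field with discriminant D = D_F and with two real embeddings ρ1, ρ2 : F → ℝ. Then for any x, y ∈ ℝ there exists α ∈ O_F such that x ≤ ρ1(α) < x + l_F and y ≤ ρ2(α) < y + l_F, where l_F = (1/2)√D + 1. -/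
open scoped NumberField TensorProduct
open Finset

noncomputable section

set_option maxHeartbeats 1600000 in
open NumberField Module in
theorem exists_sqrtD (F : Type) [Field F] [NumberField F]
    (hdeg : Module.finrank ℚ F = 2) (ρ₁ ρ₂ : F →+* ℝ) (hρ : ρ₁ ≠ ρ₂) :
    ∃ ω : 𝓞 F, ρ₁ ((ω : F)) - ρ₂ ((ω : F)) = Real.sqrt ((NumberField.discr F : ℝ)) ∧
      0 < Real.sqrt ((NumberField.discr F : ℝ)) := by
  classical
  -- the two embeddings as `ℚ`-algebra homs into `ℂ`
  set σ₁ : F →ₐ[ℚ] ℂ := (Complex.ofRealHom.comp ρ₁).toRatAlgHom with hσ₁def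
  set σ₂ : F →ₐ[ℚ] ℂ := (Complex.ofRealHom.comp ρ₂).toRatAlgHom with hσ₂def
  have hσ : σ₁ ≠ σ₂ := by
    intro h
    apply hρ
    ext z
    have : σ₁ z = σ₂ z := by rw [h]
    simpa [hσ₁def, hσ₂def, RingHom.toRatAlgHom] using this
  have cardAH : Fintype.card (F →ₐ[ℚ] ℂ) = 2 := by
    rw [← Fintype.card_congr (RingHom.equivRatAlgHom F ℂ), Embeddings.card F ℂ, hdeg]
  set ι := Free.ChooseBasisIndex ℤ (𝓞 F) with hι
  have cardι : Fintype.card ι = 2 := by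
    rw [← Module.finrank_eq_card_chooseBasisIndex, RingOfIntegers.rank, hdeg]
  have f : Fin 2 ≃ ι := Fintype.equivOfCardEq (by rw [Fintype.card_fin, cardι])
  set v : Fin 2 → (F →ₐ[ℚ] ℂ) := ![σ₁, σ₂] with hv
  have hvinj : Function.Injective v := by
    intro i j hij
    fin_cases i <;> fin_cases j <;>
      first
        | rfl
        | exact absurd (by simpa [hv] using hij) hσ
        | exact absurd (by simpa [hv] using hij.symm) hσ
  have hvbij : Function.Bijective v :=
    (Fintype.bijective_iff_injective_and_card v).2 ⟨hvinj, by rw [Fintype.card_fin, cardAH]⟩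
  set e : ι ≃ (F →ₐ[ℚ] ℂ) := f.symm.trans (Equiv.ofBijective v hvbij) with he
  have key := Algebra.discr_eq_det_embeddingsMatrixReindex_pow_two ℚ ℂ (integralBasis F) e
  set b := integralBasis F with hb
  set M := Algebra.embeddingsMatrixReindex ℚ ℂ b e with hM
  have hσap₁ : ∀ z : F, σ₁ z = ((ρ₁ z : ℝ) : ℂ) := fun z => rfl
  have hσap₂ : ∀ z : F, σ₂ z = ((ρ₂ z : ℝ) : ℂ) := fun z => rfl
  set β₁ : F := b (f 0) with hβ₁
  set β₂ : F := b (f 1) with hβ₂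
  set d : ℝ := ρ₁ β₁ * ρ₂ β₂ - ρ₂ β₁ * ρ₁ β₂ with hd
  have hdet : M.det = (M.submatrix f f).det := (Matrix.det_submatrix_equiv_self f M).symm
  have hsub : M.submatrix f f = !![σ₁ β₁, σ₂ β₁; σ₁ β₂, σ₂ β₂] := by
    ext i j
    fin_cases i <;> fin_cases j <;>
      simp [hM, Algebra.embeddingsMatrixReindex, Algebra.embeddingsMatrix, he, hv,
        hβ₁, hβ₂]
  have hDd : ((NumberField.discr F : ℝ) : ℂ) = ((d : ℝ) : ℂ) ^ 2 := by
    calc ((NumberField.discr F : ℝ) : ℂ) = algebraMap ℚ ℂ ((NumberField.discr F : ℚ)) := by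
          simp
      _ = algebraMap ℚ ℂ (Algebra.discr ℚ b) := by rw [coe_discr]
      _ = M.det ^ 2 := key
      _ = ((d : ℝ) : ℂ) ^ 2 := by
          rw [hdet, hsub, Matrix.det_fin_two_of, hσap₁, hσap₁, hσap₂, hσap₂, hd]
          push_cast
          ring
  have hD : (NumberField.discr F : ℝ) = d ^ 2 := by exact_mod_cast hDd
  have hdne : d ≠ 0 := by
    intro h
    have : (NumberField.discr F : ℝ) = 0 := by rw [hD, h]; ring
    exact NumberField.discr_ne_zero F (by exact_mod_cast this)
  have hsqrt : Real.sqrt ((NumberField.discr F : ℝ)) = |d| := by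
    rw [hD, Real.sqrt_sq_eq_abs]
  have hpos : 0 < Real.sqrt ((NumberField.discr F : ℝ)) := by
    rw [hsqrt]; exact abs_pos.mpr hdne
  -- the coordinates of 1 in an integral basis
  set C : Basis (Fin 2) ℤ (𝓞 F) := (RingOfIntegers.basis F).reindex f.symm with hCdef
  have hC0 : (algebraMap (𝓞 F) F) (C 0) = β₁ := by
    rw [hCdef, Basis.reindex_apply, Equiv.symm_symm, hβ₁, hb, integralBasis_apply]
  have hC1 : (algebraMap (𝓞 F) F) (C 1) = β₂ := by
    rw [hCdef, Basis.reindex_apply, Equiv.symm_symm, hβ₂, hb, integralBasis_apply]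
  set a₀ : ℤ := C.repr 1 0 with ha₀
  set b₀ : ℤ := C.repr 1 1 with hb₀
  have hsum : a₀ • C 0 + b₀ • C 1 = 1 := by
    have := C.sum_repr 1
    rwa [Fin.sum_univ_two] at this
  have h1 : (a₀ : ℝ) * ρ₁ β₁ + (b₀ : ℝ) * ρ₁ β₂ = 1 := by
    have := congrArg (fun z : 𝓞 F => ρ₁ ((algebraMap (𝓞 F) F) z)) hsum
    simpa [map_add, map_zsmul, zsmul_eq_mul, hC0, hC1] using this
  have h2 : (a₀ : ℝ) * ρ₂ β₁ + (b₀ : ℝ) * ρ₂ β₂ = 1 := by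
    have := congrArg (fun z : 𝓞 F => ρ₂ ((algebraMap (𝓞 F) F) z)) hsum
    simpa [map_add, map_zsmul, zsmul_eq_mul, hC0, hC1] using this
  -- gcd of the coordinates is 1
  set g : ℕ := Int.gcd a₀ b₀ with hg
  obtain ⟨a', ha'⟩ : ((g : ℤ)) ∣ a₀ := Int.gcd_dvd_left a₀ b₀
  obtain ⟨b', hb'⟩ : ((g : ℤ)) ∣ b₀ := Int.gcd_dvd_right a₀ b₀
  have hgu : ((g : ℤ) : 𝓞 F) * ((a' : 𝓞 F) * C 0 + (b' : 𝓞 F) * C 1) = 1 := by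
    have h : ((g : ℤ) * a') • C 0 + ((g : ℤ) * b') • C 1 = 1 := by
      rw [← ha', ← hb']; exact hsum
    rw [← h]
    push_cast [zsmul_eq_mul]
    ring
  have hunit : IsUnit (((g : ℤ) : 𝓞 F)) := IsUnit.of_mul_eq_one _ hgu
  have hnorm : IsUnit ((g : ℤ) ^ Fintype.card ι) := by
    have h := hunit.map (Algebra.norm ℤ (S := 𝓞 F))
    rwa [show (((g : ℤ)) : 𝓞 F) = algebraMap ℤ (𝓞 F) ((g : ℤ)) from by simp,
      Algebra.norm_algebraMap_of_basis (RingOfIntegers.basis F)] at h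
  have hg1 : (g : ℤ) = 1 := by
    rw [cardι] at hnorm
    rcases Int.isUnit_iff.mp hnorm with h | h
    · nlinarith [Int.natCast_nonneg g]
    · nlinarith [sq_nonneg ((g : ℤ))]
  have hbez : a₀ * Int.gcdA a₀ b₀ + b₀ * Int.gcdB a₀ b₀ = 1 := by
    have := Int.gcd_eq_gcd_ab a₀ b₀
    rw [← hg, hg1] at this
    linarith
  set A : ℤ := Int.gcdA a₀ b₀ with hA
  set B : ℤ := Int.gcdB a₀ b₀ with hB
  set ω₀ : 𝓞 F := B • C 0 - A • C 1 with hω₀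
  have hro₁ : ρ₁ ((algebraMap (𝓞 F) F) ω₀) = (B : ℝ) * ρ₁ β₁ - (A : ℝ) * ρ₁ β₂ := by
    simp [hω₀, map_sub, map_zsmul, zsmul_eq_mul, hC0, hC1]
  have hro₂ : ρ₂ ((algebraMap (𝓞 F) F) ω₀) = (B : ℝ) * ρ₂ β₁ - (A : ℝ) * ρ₂ β₂ := by
    simp [hω₀, map_sub, map_zsmul, zsmul_eq_mul, hC0, hC1]
  have hbezR : (a₀ : ℝ) * (A : ℝ) + (b₀ : ℝ) * (B : ℝ) = 1 := by exact_mod_cast hbez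
  have hd1 : ρ₁ β₁ - ρ₂ β₁ = (b₀ : ℝ) * d := by
    rw [hd]; linear_combination ρ₂ β₁ * h1 - ρ₁ β₁ * h2
  have hd2 : ρ₁ β₂ - ρ₂ β₂ = -((a₀ : ℝ) * d) := by
    rw [hd]; linear_combination ρ₂ β₂ * h1 - ρ₁ β₂ * h2
  have hfinal : ρ₁ ((algebraMap (𝓞 F) F) ω₀) - ρ₂ ((algebraMap (𝓞 F) F) ω₀) = d := by
    rw [hro₁, hro₂]
    linear_combination (B : ℝ) * hd1 - (A : ℝ) * hd2 + d * hbezR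
  rcases le_or_gt 0 d with hd0 | hd0
  · refine ⟨ω₀, ?_, hpos⟩
    rw [hsqrt, abs_of_nonneg hd0]
    exact hfinal
  · refine ⟨-ω₀, ?_, hpos⟩
    have : ((-ω₀ : 𝓞 F) : F) = -((algebraMap (𝓞 F) F) ω₀) := by
      push_cast; rfl
    rw [this, map_neg, map_neg, hsqrt, abs_of_neg hd0]
    linarith [hfinal]


/-- Let `F` be a real quadratic number field with discriminant `D` and
real embeddings `ρ₁, ρ₂`.  For any `x, y ∈ ℝ` there is `α ∈ 𝓞 F` with
`x ≤ ρ₁ α < x + l_F` and `y ≤ ρ₂ α < y + l_F`, where `l_F = √D / 2 + 1`. -/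
theorem statement7 (F : Type) [Field F] [NumberField F] (hF : IsTotallyRealField F)
    (hdeg : Module.finrank ℚ F = 2) (ρ₁ ρ₂ : F →+* ℝ) (hρ : ρ₁ ≠ ρ₂) (x y : ℝ) :
    ∃ α : 𝓞 F,
      (x ≤ ρ₁ ((α : F)) ∧
        ρ₁ ((α : F)) < x + (Real.sqrt ((NumberField.discr F : ℝ)) / 2 + 1)) ∧
      (y ≤ ρ₂ ((α : F)) ∧
        ρ₂ ((α : F)) < y + (Real.sqrt ((NumberField.discr F : ℝ)) / 2 + 1)) := by
  obtain ⟨ω, hω, hpos⟩ := exists_sqrtD F hdeg ρ₁ ρ₂ hρ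
  set δ := Real.sqrt ((NumberField.discr F : ℝ)) with hδ
  set bI : ℤ := round ((x - y) / δ) with hbI
  set L₁ := x - (bI : ℝ) * ρ₁ ((ω : F)) with hL₁
  set L₂ := y - (bI : ℝ) * ρ₂ ((ω : F)) with hL₂
  have habs : |L₁ - L₂| ≤ δ / 2 := by
    have h := abs_sub_round ((x - y) / δ)
    have hmul : (x - y) / δ * δ = x - y := div_mul_cancel₀ _ (ne_of_gt hpos)
    have h2 : L₁ - L₂ = ((x - y) / δ - (bI : ℝ)) * δ := by
      rw [sub_mul, hmul, hL₁, hL₂]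
      linear_combination -(bI : ℝ) * hω
    rw [h2, abs_mul, abs_of_pos hpos]
    calc |(x - y) / δ - (bI : ℝ)| * δ ≤ (1 / 2) * δ :=
          mul_le_mul_of_nonneg_right h hpos.le
      _ = δ / 2 := by ring
  obtain ⟨hab1, hab2⟩ := abs_le.mp habs
  set aI : ℤ := ⌈max L₁ L₂⌉ with haI
  have hceil1 : max L₁ L₂ ≤ (aI : ℝ) := Int.le_ceil _
  have hceil2 : (aI : ℝ) < max L₁ L₂ + 1 := Int.ceil_lt_add_one _
  have hmax1 : L₁ ≤ max L₁ L₂ := le_max_left _ _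
  have hmax2 : L₂ ≤ max L₁ L₂ := le_max_right _ _
  have hmaxle : max L₁ L₂ ≤ min L₁ L₂ + δ / 2 := by
    rcases max_cases L₁ L₂ with ⟨h, h'⟩ | ⟨h, h'⟩ <;> rcases min_cases L₁ L₂ with ⟨g, g'⟩ | ⟨g, g'⟩ <;>
      rw [h, g] <;> linarith
  have hint : ∀ n : ℤ, ((n : 𝓞 F) : F) = (n : F) := fun n =>
    map_intCast (algebraMap (𝓞 F) F) n
  refine ⟨(aI : 𝓞 F) + bI • ω, ?_, ?_⟩
  · have hc : (((aI : 𝓞 F) + bI • ω : 𝓞 F) : F) = (aI : F) + (bI : F) * (ω : F) := by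
      push_cast [zsmul_eq_mul, hint]
      ring
    have hα : ρ₁ (((aI : 𝓞 F) + bI • ω : 𝓞 F) : F) = (aI : ℝ) + (bI : ℝ) * ρ₁ ((ω : F)) := by
      rw [hc, map_add, map_mul, map_intCast, map_intCast]
    rw [hα]
    constructor
    · have : L₁ ≤ (aI : ℝ) := le_trans hmax1 hceil1
      rw [hL₁] at this; linarith
    · have h1 : min L₁ L₂ ≤ L₁ := min_le_left _ _
      have : (aI : ℝ) < L₁ + δ / 2 + 1 := by linarith
      rw [hL₁] at this; linarith
  · have hc : (((aI : 𝓞 F) + bI • ω : 𝓞 F) : F) = (aI : F) + (bI : F) * (ω : F) := by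
      push_cast [zsmul_eq_mul, hint]
      ring
    have hα : ρ₂ (((aI : 𝓞 F) + bI • ω : 𝓞 F) : F) = (aI : ℝ) + (bI : ℝ) * ρ₂ ((ω : F)) := by
      rw [hc, map_add, map_mul, map_intCast, map_intCast]
    rw [hα]
    constructor
    · have : L₂ ≤ (aI : ℝ) := le_trans hmax2 hceil1
      rw [hL₂] at this; linarith
    · have h1 : min L₁ L₂ ≤ L₂ := min_le_right _ _
      have : (aI : ℝ) < L₂ + δ / 2 + 1 := by linarith
      rw [hL₂] at this; linarith

end
end
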